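/- If X is a nonzero invariant subspace of a trace-preserving completely positive map E on a finite-dimensional Hilbert space, then there exists a fixed point state ρ_X of E with supp(ρ_X) ⊆ X. -/

import Mathlib

open Matrix Filter Topology
open scoped ComplexOrder

/-- The matrix of the orthogonal projection onto a subspace `X`. -/
noncomputable def projMat {d : ℕ} (X : Submodule ℂ (EuclideanSpace ℂ (Fin d))) :
    Matrix (Fin d) (Fin d) ℂ :=
  Matrix.toEuclideanLin.symm ((X.subtypeL.comp (Submodule.orthogonalProjection X)).toLinearMap)

/-- The support of an operator: the range of the associated linear map. -/
noncomputable def matSupp {d : ℕ} (A : Matrix (Fin d) (Fin d) ℂ) :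
    Submodule ℂ (EuclideanSpace ℂ (Fin d)) :=
  LinearMap.range (Matrix.toEuclideanLin A)

/-- The outer product `|v⟩⟨v|`. -/
noncomputable def outer {d : ℕ} (v : EuclideanSpace ℂ (Fin d)) : Matrix (Fin d) (Fin d) ℂ :=
  fun i j => v i * star (v j)

/-- The completely positive map `A ↦ ∑ i, E i * A * (E i)†` given by Kraus operators `E`. -/
noncomputable def krausMap {d m : ℕ} (E : Fin m → Matrix (Fin d) (Fin d) ℂ)
    (A : Matrix (Fin d) (Fin d) ℂ) : Matrix (Fin d) (Fin d) ℂ :=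
  ∑ i, E i * A * (E i)ᴴ

section Auxiliary

variable {d : ℕ}

lemma aux_toEuclideanLin_mul (A B : Matrix (Fin d) (Fin d) ℂ) :
    Matrix.toEuclideanLin (A * B) = (Matrix.toEuclideanLin A) ∘ₗ (Matrix.toEuclideanLin B) := by
  refine LinearMap.ext fun v => ?_
  simp [Matrix.toEuclideanLin_apply, Matrix.mulVec_mulVec]

lemma aux_posSemidef_zero : (0 : Matrix (Fin d) (Fin d) ℂ).PosSemidef :=
  ⟨by simp [Matrix.IsHermitian], fun x => by simp [Matrix.mulVec_zero]⟩

lemma aux_posSemidef_add {A B : Matrix (Fin d) (Fin d) ℂ} (hA : A.PosSemidef)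
    (hB : B.PosSemidef) : (A + B).PosSemidef :=
  ⟨by show _ᴴ = _; rw [Matrix.conjTranspose_add, hA.1.eq, hB.1.eq],
    (hA.add hB).2⟩

lemma aux_posSemidef_sum {ι : Type*} (s : Finset ι) (f : ι → Matrix (Fin d) (Fin d) ℂ)
    (h : ∀ i ∈ s, (f i).PosSemidef) : (∑ i ∈ s, f i).PosSemidef :=
  Finset.sum_induction f _ (fun _ _ ha hb => aux_posSemidef_add ha hb) aux_posSemidef_zero h

lemma aux_posSemidef_smul_real {A : Matrix (Fin d) (Fin d) ℂ} (hA : A.PosSemidef) {r : ℝ}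
    (hr : 0 ≤ r) : ((r : ℂ) • A).PosSemidef := by
  constructor
  · show ((r : ℂ) • A)ᴴ = _
    rw [Matrix.conjTranspose_smul, hA.1.eq]
    congr 1
    simp
  · intro x
    exact (hA.smul (a := (r : ℂ)) (by exact_mod_cast Complex.zero_le_real.2 hr)).2 x

/-- Entries of a PSD matrix of trace one are bounded by one. -/
lemma aux_entry_bound {A : Matrix (Fin d) (Fin d) ℂ} (hA : A.PosSemidef) (htr : A.trace = 1)
    (i j : Fin d) : ‖A i j‖ ≤ 1 := by
  obtain ⟨B, hB⟩ : ∃ B : Matrix (Fin d) (Fin d) ℂ, A = Bᴴ * B := by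
    open scoped MatrixOrder Matrix.Norms.L2Operator in
    exact CStarAlgebra.nonneg_iff_eq_star_mul_self.mp hA.nonneg
  have hinner : ∀ i j, (inner ℂ ((WithLp.equiv 2 _).symm (fun k => B k i) : EuclideanSpace ℂ (Fin d))
      ((WithLp.equiv 2 _).symm (fun k => B k j)) : ℂ) = A i j := by
    intro i j
    rw [hB, Matrix.mul_apply, PiLp.inner_apply]
    congr 1
    funext k
    simp [Matrix.conjTranspose_apply, mul_comm]
  set col : Fin d → EuclideanSpace ℂ (Fin d) := fun i => (WithLp.equiv 2 _).symm (fun k => B k i)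
  have h1 : ∀ k, ‖col k‖ ^ 2 = (A k k).re := by
    intro k
    rw [← hinner k k, ← inner_self_eq_norm_sq (𝕜 := ℂ)]
    rfl
  have hsum : ∑ k, (A k k).re = 1 := by
    have h := congrArg Complex.re htr
    simpa [Matrix.trace, Matrix.diag, Complex.re_sum] using h
  have hnorm : ∀ k, ‖col k‖ ≤ 1 := by
    intro k
    have hk : ‖col k‖ ^ 2 ≤ 1 := by
      rw [h1, ← hsum]
      exact Finset.single_le_sum (f := fun l => (A l l).re)
        (fun l _ => by show 0 ≤ (A l l).re; rw [← h1]; positivity) (Finset.mem_univ k)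
    nlinarith [norm_nonneg (col k)]
  calc ‖A i j‖ = ‖(inner ℂ (col i) (col j) : ℂ)‖ := by rw [hinner]
    _ ≤ ‖col i‖ * ‖col j‖ := norm_inner_le_norm _ _
    _ ≤ 1 * 1 := mul_le_mul (hnorm i) (hnorm j) (norm_nonneg _) zero_le_one
    _ = 1 := one_mul 1

variable (X : Submodule ℂ (EuclideanSpace ℂ (Fin d)))

lemma aux_projMat_lin : Matrix.toEuclideanLin (projMat X)
    = (X.subtypeL.comp (X.orthogonalProjection)).toLinearMap :=
  Matrix.toEuclideanLin.apply_symm_apply _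

lemma aux_projMat_mem (v : EuclideanSpace ℂ (Fin d)) :
    Matrix.toEuclideanLin (projMat X) v ∈ X := by
  rw [aux_projMat_lin]
  exact (X.orthogonalProjection v).2

lemma aux_projMat_fix (v : EuclideanSpace ℂ (Fin d)) (hv : v ∈ X) :
    Matrix.toEuclideanLin (projMat X) v = v := by
  rw [aux_projMat_lin]
  show (X.subtypeL.comp (X.orthogonalProjection)) v = v
  simp only [ContinuousLinearMap.comp_apply, Submodule.subtypeL_apply]
  exact Submodule.starProjection_eq_self_iff.mpr hv

lemma aux_projMat_absorb (M : Matrix (Fin d) (Fin d) ℂ)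
    (hM : ∀ v, Matrix.toEuclideanLin M v ∈ X) : projMat X * M = M := by
  apply Matrix.toEuclideanLin.injective
  rw [aux_toEuclideanLin_mul]
  refine LinearMap.ext fun v => ?_
  rw [LinearMap.comp_apply]
  exact aux_projMat_fix X _ (hM v)

lemma aux_projMat_herm : (projMat X)ᴴ = projMat X := by
  apply Matrix.toEuclideanLin.injective
  rw [Matrix.toEuclideanLin_conjTranspose_eq_adjoint, aux_projMat_lin]
  symm
  rw [LinearMap.eq_adjoint_iff]
  intro x y
  exact Submodule.inner_starProjection_left_eq_right X x y

lemma aux_trace_pos (P : Matrix (Fin d) (Fin d) ℂ) (hPP : P * P = P) (hPH : Pᴴ = P)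
    (hPne : P ≠ 0) : ∃ r : ℝ, 0 < r ∧ P.trace = (r : ℂ) := by
  refine ⟨∑ j, ∑ i, Complex.normSq (P i j), ?_, ?_⟩
  · obtain ⟨i0, j0, h0⟩ : ∃ i j, P i j ≠ 0 := by
      by_contra h; push_neg at h; exact hPne (by ext i j; simp [h])
    calc (0:ℝ) < Complex.normSq (P i0 j0) := Complex.normSq_pos.mpr h0
    _ ≤ ∑ i, Complex.normSq (P i j0) :=
        Finset.single_le_sum (f := fun i => Complex.normSq (P i j0))
          (fun _ _ => Complex.normSq_nonneg _) (Finset.mem_univ i0)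
    _ ≤ ∑ j, ∑ i, Complex.normSq (P i j) :=
        Finset.single_le_sum (f := fun j => ∑ i, Complex.normSq (P i j))
          (fun _ _ => Finset.sum_nonneg fun _ _ => Complex.normSq_nonneg _) (Finset.mem_univ j0)
  · have hsym : ∀ i j, P j i = star (P i j) := by
      intro i j
      conv_lhs => rw [← hPH]
      simp [Matrix.conjTranspose_apply]
    conv_lhs => rw [← hPP]
    rw [show ((∑ j, ∑ i, Complex.normSq (P i j) : ℝ) : ℂ)
        = ∑ j, ∑ i, (Complex.normSq (P i j) : ℂ) by push_cast; rfl]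
    simp only [Matrix.trace, Matrix.diag, Matrix.mul_apply]
    refine Finset.sum_congr rfl fun j _ => Finset.sum_congr rfl fun i _ => ?_
    rw [hsym i j, Complex.normSq_eq_conj_mul_self, starRingEnd_apply]

end Auxiliary

section KrausAux

variable {d m : ℕ} (E : Fin m → Matrix (Fin d) (Fin d) ℂ)

lemma aux_krausMap_trace (hE : ∑ i, (E i)ᴴ * E i = 1) (A : Matrix (Fin d) (Fin d) ℂ) :
    (krausMap E A).trace = A.trace := by
  rw [krausMap, Matrix.trace_sum]
  have h : ∀ i, (E i * A * (E i)ᴴ).trace = ((E i)ᴴ * E i * A).trace := by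
    intro i
    rw [Matrix.trace_mul_cycle]
  simp_rw [h, ← Matrix.trace_sum, ← Finset.sum_mul, hE, Matrix.one_mul]

lemma aux_krausMap_posSemidef {A : Matrix (Fin d) (Fin d) ℂ} (hA : A.PosSemidef) :
    (krausMap E A).PosSemidef :=
  aux_posSemidef_sum _ _ fun i _ => hA.mul_mul_conjTranspose_same (E i)

lemma aux_krausMap_smul (c : ℂ) (A : Matrix (Fin d) (Fin d) ℂ) :
    krausMap E (c • A) = c • krausMap E A := by
  rw [krausMap, krausMap, Finset.smul_sum]
  refine Finset.sum_congr rfl fun i _ => ?_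
  rw [Matrix.mul_smul, Matrix.smul_mul]

lemma aux_krausMap_sum {ι : Type*} (s : Finset ι) (f : ι → Matrix (Fin d) (Fin d) ℂ) :
    krausMap E (∑ n ∈ s, f n) = ∑ n ∈ s, krausMap E (f n) := by
  simp only [krausMap]
  rw [Finset.sum_comm]
  refine Finset.sum_congr rfl fun i _ => ?_
  rw [Finset.mul_sum, Finset.sum_mul]

lemma aux_krausMap_continuous : Continuous (krausMap E) := by
  refine continuous_finset_sum _ fun i _ => ?_
  exact (continuous_const.matrix_mul continuous_id).matrix_mul continuous_const

end KrausAux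

/-- Every nonzero invariant subspace contains the support of some fixed point state. -/
theorem stmt7 {d m : ℕ} (E : Fin m → Matrix (Fin d) (Fin d) ℂ)
    (hE : ∑ i, (E i)ᴴ * E i = 1)
    (X : Submodule ℂ (EuclideanSpace ℂ (Fin d))) (hX : X ≠ ⊥)
    (hinv : ∀ i : Fin m, ∀ v : EuclideanSpace ℂ (Fin d), v ∈ X → Matrix.toEuclideanLin (E i) v ∈ X) :
    ∃ ρ : Matrix (Fin d) (Fin d) ℂ, ρ.PosSemidef ∧ ρ ≠ 0 ∧ ρ.trace ≤ 1 ∧ krausMap E ρ = ρ ∧ matSupp ρ ≤ X := by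
  classical
  set P : Matrix (Fin d) (Fin d) ℂ := projMat X with hPdef
  have hPmem : ∀ v, Matrix.toEuclideanLin P v ∈ X := aux_projMat_mem X
  have hPP : P * P = P := aux_projMat_absorb X P hPmem
  have hPH : Pᴴ = P := aux_projMat_herm X
  have hPpsd : P.PosSemidef := by
    have h := Matrix.posSemidef_conjTranspose_mul_self P
    rwa [hPH, hPP] at h
  have hPne : P ≠ 0 := by
    obtain ⟨v, hvX, hv0⟩ := Submodule.exists_mem_ne_zero_of_ne_bot hX
    intro h
    apply hv0
    have h2 := aux_projMat_fix X v hvX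
    rw [show projMat X = P from rfl, h] at h2
    simpa using h2.symm
  obtain ⟨r, hr, htrP⟩ := aux_trace_pos P hPP hPH hPne
  -- the invariant compact convex set
  set K0 : Set (Matrix (Fin d) (Fin d) ℂ) :=
    {A | A.PosSemidef ∧ A.trace = 1 ∧ P * A * P = A} with hK0def
  have hK0closed : IsClosed K0 := by
    have h0le : IsClosed {z : ℂ | 0 ≤ z} := by
      have hset : {z : ℂ | 0 ≤ z} = Complex.re ⁻¹' (Set.Ici 0) ∩ Complex.im ⁻¹' {0} := by
        ext z
        simp only [Set.mem_setOf_eq, Set.mem_inter_iff, Set.mem_preimage, Set.mem_Ici,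
          Set.mem_singleton_iff, Complex.le_def, Complex.zero_re, Complex.zero_im]
        tauto
      rw [hset]
      exact (isClosed_Ici.preimage Complex.continuous_re).inter
        (isClosed_singleton.preimage Complex.continuous_im)
    have h1 : IsClosed {A : Matrix (Fin d) (Fin d) ℂ | A.PosSemidef} := by
      have hset : {A : Matrix (Fin d) (Fin d) ℂ | A.PosSemidef}
          = {A : Matrix (Fin d) (Fin d) ℂ | Aᴴ = A}
            ∩ ⋂ x : Fin d → ℂ, {A : Matrix (Fin d) (Fin d) ℂ | 0 ≤ star x ⬝ᵥ A *ᵥ x} := by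
        ext A
        simp only [Set.mem_setOf_eq, Set.mem_inter_iff, Set.mem_iInter]
        exact Matrix.posSemidef_iff_dotProduct_mulVec
      rw [hset]
      refine (isClosed_eq (continuous_id.matrix_conjTranspose) continuous_id).inter
        (isClosed_iInter fun x => ?_)
      exact h0le.preimage
        (continuous_const.dotProduct (continuous_id.matrix_mulVec continuous_const))
    refine h1.inter ?_
    refine (isClosed_eq (continuous_id.matrix_trace) continuous_const).inter ?_
    exact isClosed_eq ((continuous_const.matrix_mul continuous_id).matrix_mul continuous_const)
      continuous_id
  -- the Kraus map preserves K0
  have hTmem : ∀ A ∈ K0, krausMap E A ∈ K0 := by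
    rintro A ⟨hA1, hA2, hA3⟩
    refine ⟨aux_krausMap_posSemidef E hA1, ?_, ?_⟩
    · rw [aux_krausMap_trace E hE]; exact hA2
    · have key : ∀ i, P * (E i * A * (E i)ᴴ) * P = E i * A * (E i)ᴴ := by
        intro i
        have hBmem : ∀ v, Matrix.toEuclideanLin (E i * P) v ∈ X := by
          intro v
          rw [aux_toEuclideanLin_mul]
          exact hinv i _ (hPmem v)
        have hPB : P * (E i * P) = E i * P := aux_projMat_absorb X _ hBmem
        have hBPH : (E i * P)ᴴ * P = (E i * P)ᴴ := by
          have h := congrArg Matrix.conjTranspose hPB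
          rwa [Matrix.conjTranspose_mul, hPH] at h
        have hform : E i * A * (E i)ᴴ = (E i * P) * A * (E i * P)ᴴ := by
          conv_lhs => rw [← hA3]
          simp only [Matrix.conjTranspose_mul, hPH, Matrix.mul_assoc]
        rw [hform]
        calc P * ((E i * P) * A * (E i * P)ᴴ) * P
            = (P * (E i * P)) * A * ((E i * P)ᴴ * P) := by simp only [Matrix.mul_assoc]
          _ = (E i * P) * A * (E i * P)ᴴ := by rw [hPB, hBPH]
      show P * krausMap E A * P = krausMap E A
      rw [krausMap, Finset.mul_sum, Finset.sum_mul]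
      exact Finset.sum_congr rfl fun i _ => key i
  -- starting point and iterates
  set ρ0 : Matrix (Fin d) (Fin d) ℂ := ((r⁻¹ : ℝ) : ℂ) • P with hρ0def
  have hρ0K : ρ0 ∈ K0 := by
    refine ⟨aux_posSemidef_smul_real hPpsd (by positivity), ?_, ?_⟩
    · rw [hρ0def, Matrix.trace_smul, htrP, smul_eq_mul, ← Complex.ofReal_mul,
        inv_mul_cancel₀ (ne_of_gt hr), Complex.ofReal_one]
    · rw [hρ0def, Matrix.mul_smul, Matrix.smul_mul, hPP, hPP]
  set g : ℕ → Matrix (Fin d) (Fin d) ℂ := fun n => (krausMap E)^[n] ρ0 with hgdef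
  have hgK : ∀ n, g n ∈ K0 := by
    intro n
    induction n with
    | zero => simpa [hgdef] using hρ0K
    | succ n ih =>
      have h : g (n+1) = krausMap E (g n) := Function.iterate_succ_apply' _ _ _
      rw [h]
      exact hTmem _ ih
  have hgsucc : ∀ n, g (n+1) = krausMap E (g n) := fun n => Function.iterate_succ_apply' _ _ _
  set c : ℕ → ℝ := fun N => ((N:ℝ)+1)⁻¹ with hcdef
  have hc_pos : ∀ N, 0 < c N := fun N => by positivity
  set S : ℕ → Matrix (Fin d) (Fin d) ℂ :=
    fun N => ((c N : ℝ) : ℂ) • ∑ n ∈ Finset.range (N+1), g n with hSdef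
  have hSK : ∀ N, S N ∈ K0 := by
    intro N
    have hsum := aux_posSemidef_sum (Finset.range (N+1)) g (fun n _ => (hgK n).1)
    refine ⟨aux_posSemidef_smul_real hsum (le_of_lt (hc_pos N)), ?_, ?_⟩
    · rw [hSdef]
      show (((c N : ℝ) : ℂ) • ∑ n ∈ Finset.range (N+1), g n).trace = 1
      rw [Matrix.trace_smul, Matrix.trace_sum]
      have h : ∑ n ∈ Finset.range (N+1), (g n).trace = ((N:ℂ)+1) := by
        rw [Finset.sum_congr rfl fun n _ => (hgK n).2.1]
        simp
      rw [h, smul_eq_mul, hcdef]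
      push_cast
      rw [inv_mul_cancel₀]
      positivity
    · show P * S N * P = S N
      rw [hSdef]
      show P * (((c N : ℝ) : ℂ) • ∑ n ∈ Finset.range (N+1), g n) * P = _
      rw [Matrix.mul_smul, Matrix.smul_mul, Finset.mul_sum, Finset.sum_mul]
      congr 1
      exact Finset.sum_congr rfl fun n _ => (hgK n).2.2
  -- compactness
  have hC : IsCompact {A : Matrix (Fin d) (Fin d) ℂ | ∀ i j, ‖A i j‖ ≤ 1} := by
    have hset : {A : Matrix (Fin d) (Fin d) ℂ | ∀ i j, ‖A i j‖ ≤ 1}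
        = Set.pi Set.univ (fun _ : Fin d => Set.pi Set.univ
            fun _ : Fin d => Metric.closedBall (0:ℂ) 1) := by
      ext A
      constructor
      · intro h
        exact fun i _ j _ => by simpa [Metric.mem_closedBall, dist_zero_right] using h i j
      · intro h i j
        simpa [Metric.mem_closedBall, dist_zero_right] using h i (Set.mem_univ i) j (Set.mem_univ j)
    rw [hset]
    exact isCompact_univ_pi fun i => isCompact_univ_pi fun j => isCompact_closedBall 0 1
  have hK : IsCompact (K0 ∩ {A | ∀ i j, ‖A i j‖ ≤ 1}) := hC.inter_left hK0closed
  have hSK' : ∀ N, S N ∈ K0 ∩ {A | ∀ i j, ‖A i j‖ ≤ 1} := fun N =>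
    ⟨hSK N, fun i j => aux_entry_bound (hSK N).1 (hSK N).2.1 i j⟩
  haveI : FirstCountableTopology (Matrix (Fin d) (Fin d) ℂ) :=
    inferInstanceAs (FirstCountableTopology (Fin d → Fin d → ℂ))
  obtain ⟨ρ, hρmem, φ, hφ, hlim⟩ := hK.tendsto_subseq hSK'
  -- the Cesàro averages are almost fixed
  have hTS : ∀ N, krausMap E (S N) = S N + ((c N : ℝ) : ℂ) • (g (N+1) - g 0) := by
    intro N
    rw [hSdef]
    show krausMap E (((c N : ℝ) : ℂ) • ∑ n ∈ Finset.range (N+1), g n) = _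
    rw [aux_krausMap_smul, aux_krausMap_sum]
    have h1 : ∑ n ∈ Finset.range (N+1), krausMap E (g n)
        = ∑ n ∈ Finset.range (N+1), g (n+1) :=
      Finset.sum_congr rfl fun n _ => (hgsucc n).symm
    rw [h1]
    have e1 := Finset.sum_range_succ' g (N+1)
    have e2 := Finset.sum_range_succ g (N+1)
    rw [e2] at e1
    have h2 : ∑ n ∈ Finset.range (N+1), g (n+1)
        = ∑ n ∈ Finset.range (N+1), g n + (g (N+1) - g 0) := by
      have h3 := eq_sub_of_add_eq e1.symm
      rw [h3]
      abel
    rw [h2, smul_add]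
  have herr : Tendsto (fun N => ((c N : ℝ) : ℂ) • (g (N+1) - g 0)) atTop
      (𝓝 (0 : Matrix (Fin d) (Fin d) ℂ)) := by
    apply tendsto_pi_nhds.mpr
    intro i
    rw [tendsto_pi_nhds]
    intro j
    have hb : ∀ N, ‖((((c N : ℝ) : ℂ) • (g (N+1) - g 0)) i j)‖ ≤ (1/((N:ℝ)+1)) * 2 := by
      intro N
      have h1 : ‖(g (N+1)) i j‖ ≤ 1 := aux_entry_bound (hgK (N+1)).1 (hgK (N+1)).2.1 i j
      have h2 : ‖(g 0) i j‖ ≤ 1 := aux_entry_bound (hgK 0).1 (hgK 0).2.1 i j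
      have happ : ((((c N : ℝ) : ℂ) • (g (N+1) - g 0)) i j)
          = ((c N : ℝ) : ℂ) * ((g (N+1)) i j - (g 0) i j) := by
        simp [Matrix.smul_apply, Matrix.sub_apply, smul_eq_mul]
      rw [happ, norm_mul]
      have hnc : ‖((c N : ℝ) : ℂ)‖ = 1/((N:ℝ)+1) := by
        rw [Complex.norm_real, Real.norm_eq_abs, abs_of_pos (hc_pos N), hcdef, one_div]
      rw [hnc]
      have hd2 : ‖(g (N+1)) i j - (g 0) i j‖ ≤ 2 := by
        calc ‖(g (N+1)) i j - (g 0) i j‖ ≤ ‖(g (N+1)) i j‖ + ‖(g 0) i j‖ := norm_sub_le _ _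
          _ ≤ 2 := by linarith
      have : (0:ℝ) ≤ 1/((N:ℝ)+1) := by positivity
      exact mul_le_mul_of_nonneg_left hd2 this
    have hten : Tendsto (fun N : ℕ => (1/((N:ℝ)+1)) * 2) atTop (𝓝 0) := by
      simpa using tendsto_one_div_add_atTop_nhds_zero_nat.mul_const (2:ℝ)
    have h := squeeze_zero_norm hb hten
    simpa using h
  have hφt : Tendsto φ atTop atTop := hφ.tendsto_atTop
  have hlim2 : Tendsto (fun k => krausMap E (S (φ k))) atTop (𝓝 (krausMap E ρ)) :=
    ((aux_krausMap_continuous E).tendsto ρ).comp hlim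
  have hlim3 : Tendsto (fun k => krausMap E (S (φ k))) atTop (𝓝 ρ) := by
    have heq : (fun k => krausMap E (S (φ k)))
        = fun k => S (φ k) + ((c (φ k) : ℝ) : ℂ) • (g (φ k + 1) - g 0) :=
      funext fun k => hTS (φ k)
    rw [heq]
    have h := hlim.add (herr.comp hφt)
    simpa using h
  have hfix : krausMap E ρ = ρ := tendsto_nhds_unique hlim2 hlim3
  obtain ⟨⟨hρpsd, hρtr, hρP⟩, -⟩ := hρmem
  refine ⟨ρ, hρpsd, ?_, ?_, hfix, ?_⟩
  · intro h
    rw [h] at hρtr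
    simp at hρtr
  · exact le_of_eq hρtr
  · rintro w ⟨v, rfl⟩
    show Matrix.toEuclideanLin ρ v ∈ X
    rw [← hρP, Matrix.mul_assoc, aux_toEuclideanLin_mul]
    exact hPmem _
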